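/- arXiv:math/0610074 — 5 statements merged into one kernel-verified Lean document; each statement's English description precedes it below -/
import Mathlib

section
/- Let (h₁,h₂) ∈ ℍ² satisfy |h₁|² + |h₂|² < 1. Then 1 + h₂ ≠ 0 and the point (q₁,q₂) = (h₁(1+h₂)⁻¹, (1−h₂)(1+h₂)⁻¹) satisfies Re q₂ > |q₁|²; that is, the Cayley transform maps the unit ball of ℍ² into the Siegel upper half space 𝒰₁. -/
noncomputable section

/-- The real quaternions. -/
abbrev H := Quaternion ℝ

/-- If `(h₁, h₂) ∈ ℍ²` satisfies `|h₁|² + |h₂|² < 1`, then `1 + h₂ ≠ 0` and the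
point `(q₁, q₂) = (h₁(1+h₂)⁻¹, (1−h₂)(1+h₂)⁻¹)` satisfies `Re q₂ > |q₁|²`; i.e. the Cayley
transform maps the unit ball of `ℍ²` into the Siegel upper half space `𝒰₁`. -/
theorem cayley_maps_ball_into_siegel (h₁ h₂ : H) (hb : ‖h₁‖ ^ 2 + ‖h₂‖ ^ 2 < 1) :
    1 + h₂ ≠ 0 ∧ ((1 - h₂) * (1 + h₂)⁻¹).re > ‖h₁ * (1 + h₂)⁻¹‖ ^ 2 := by
  have hn2 : ‖h₂‖ < 1 := by nlinarith [sq_nonneg ‖h₁‖, norm_nonneg h₂]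
  have ha : 1 + h₂ ≠ 0 := by
    intro h
    have h2 : h₂ = -1 := eq_neg_of_add_eq_zero_right h
    rw [h2] at hn2; simp at hn2
  refine ⟨ha, ?_⟩
  have hna : (0:ℝ) < ‖1 + h₂‖ := norm_pos_iff.mpr ha
  have key : ((1 - h₂) * star (1 + h₂)).re = 1 - ‖h₂‖ ^ 2 := by
    have h := Quaternion.normSq_eq_norm_mul_self h₂
    rw [Quaternion.normSq_def'] at h
    simp [Quaternion.re_mul, Quaternion.re_one, Quaternion.imI_one, Quaternion.imJ_one, Quaternion.imK_one]
    nlinarith [h]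
  have hinv : (1 + h₂)⁻¹ = (Quaternion.normSq (1 + h₂))⁻¹ • star (1 + h₂) :=
    Quaternion.inv_def _
  have hns : Quaternion.normSq (1 + h₂) = ‖1 + h₂‖ ^ 2 := by
    rw [Quaternion.normSq_eq_norm_mul_self]; ring
  have lhs : ((1 - h₂) * (1 + h₂)⁻¹).re = (1 - ‖h₂‖ ^ 2) / ‖1 + h₂‖ ^ 2 := by
    rw [hinv, mul_smul_comm, Quaternion.re_smul, key, hns, smul_eq_mul]
    ring
  have rhs : ‖h₁ * (1 + h₂)⁻¹‖ ^ 2 = ‖h₁‖ ^ 2 / ‖1 + h₂‖ ^ 2 := by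
    rw [norm_mul, norm_inv, mul_pow, inv_pow]; ring
  rw [lhs, rhs]
  rw [gt_iff_lt, div_lt_div_iff_of_pos_right (by positivity)]
  nlinarith [sq_nonneg ‖h₁‖]

end
end

section
/- The Cayley transform κ(q₁,q₂) = (q₁(1 + (1+q₂)⁻¹(1−q₂)), (1+q₂)⁻¹(1−q₂)) is a bijection from the Siegel upper half space 𝒰₁ = {(q₁,q₂) ∈ ℍ² : Re q₂ > |q₁|²} onto the unit ball B₁ = {(h₁,h₂) ∈ ℍ² : |h₁|² + |h₂|² < 1}, with inverse given by κ⁻¹(h₁,h₂) = (h₁(1+h₂)⁻¹, (1−h₂)(1+h₂)⁻¹). (In particular 1+q₂ ≠ 0 on 𝒰₁ and 1+h₂ ≠ 0 on B₁, so all expressions are defined.) -/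
noncomputable section

/-- The Siegel upper half space `𝒰₁ = {(q₁,q₂) ∈ ℍ² : Re q₂ > |q₁|²}`. -/
def Siegel : Set (H × H) := {q | q.2.re > ‖q.1‖ ^ 2}

/-- The unit ball `B₁ = {(h₁,h₂) ∈ ℍ² : |h₁|² + |h₂|² < 1}`. -/
def UnitBall : Set (H × H) := {h | ‖h.1‖ ^ 2 + ‖h.2‖ ^ 2 < 1}

/-- The Cayley transform `κ(q₁,q₂) = (q₁(1 + (1+q₂)⁻¹(1−q₂)), (1+q₂)⁻¹(1−q₂))`. -/
def cayley (q : H × H) : H × H :=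
  (q.1 * (1 + (1 + q.2)⁻¹ * (1 - q.2)), (1 + q.2)⁻¹ * (1 - q.2))

/-- The inverse Cayley transform `κ⁻¹(h₁,h₂) = (h₁(1+h₂)⁻¹, (1−h₂)(1+h₂)⁻¹)`. -/
def cayleyInv (h : H × H) : H × H :=
  (h.1 * (1 + h.2)⁻¹, (1 - h.2) * (1 + h.2)⁻¹)

namespace CayleyAux

open Quaternion

lemma norm_sq_eq (a : H) : ‖a‖ ^ 2 = normSq a := by
  rw [sq, ← normSq_eq_norm_mul_self]

lemma siegel_ne (q : H × H) (hq : q ∈ Siegel) : 1 + q.2 ≠ 0 := by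
  have h0 : (0:ℝ) ≤ ‖q.1‖ ^ 2 := sq_nonneg _
  have hre : q.2.re > ‖q.1‖ ^ 2 := hq
  have : (1 + q.2).re > 0 := by
    simp only [Quaternion.re_add, Quaternion.re_one]
    linarith
  intro h
  rw [h] at this
  simp at this

lemma ball_ne (h : H × H) (hh : h ∈ UnitBall) : 1 + h.2 ≠ 0 := by
  intro he
  have h2 : h.2 = -1 := eq_neg_of_add_eq_zero_right he
  have hh' : ‖h.1‖ ^ 2 + ‖h.2‖ ^ 2 < 1 := hh
  rw [h2] at hh'
  simp at hh'
  nlinarith [sq_nonneg ‖h.1‖]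

/-- `1 + (1+q)⁻¹ * (1-q) = (1+q)⁻¹ * 2`. -/
lemma key1 (q : H) (hq : 1 + q ≠ 0) :
    1 + (1 + q)⁻¹ * (1 - q) = (1 + q)⁻¹ * 2 := by
  apply mul_left_cancel₀ hq
  rw [mul_add, mul_one, mul_inv_cancel_left₀ hq, mul_inv_cancel_left₀ hq]
  noncomm_ring
  simp [two_smul]
  norm_num

/-- `1 - (1+q)⁻¹ * (1-q) = (1+q)⁻¹ * (2*q)`. -/
lemma key1' (q : H) (hq : 1 + q ≠ 0) :
    1 - (1 + q)⁻¹ * (1 - q) = (1 + q)⁻¹ * (2 * q) := by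
  apply mul_left_cancel₀ hq
  rw [mul_sub, mul_one, mul_inv_cancel_left₀ hq, mul_inv_cancel_left₀ hq]
  noncomm_ring

/-- `1 + (1-h) * (1+h)⁻¹ = 2 * (1+h)⁻¹`. -/
lemma key2 (h : H) (hh : 1 + h ≠ 0) :
    1 + (1 - h) * (1 + h)⁻¹ = 2 * (1 + h)⁻¹ := by
  apply mul_right_cancel₀ hh
  rw [add_mul, one_mul, inv_mul_cancel_right₀ hh, inv_mul_cancel_right₀ hh]
  noncomm_ring
  simp [two_smul]
  norm_num

/-- `1 - (1-h) * (1+h)⁻¹ = (2*h) * (1+h)⁻¹`. -/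
lemma key2' (h : H) (hh : 1 + h ≠ 0) :
    1 - (1 - h) * (1 + h)⁻¹ = (2 * h) * (1 + h)⁻¹ := by
  apply mul_right_cancel₀ hh
  rw [sub_mul, one_mul, inv_mul_cancel_right₀ hh, inv_mul_cancel_right₀ hh]
  noncomm_ring

lemma two_ne : (2 : H) ≠ 0 := by
  intro h
  have h2 : (2 : H).re = 0 := by rw [h]; simp
  rw [show (2 : H) = ((2:ℕ) : H) by norm_cast, Quaternion.re_natCast] at h2
  norm_num at h2

lemma conj2 (c x : H) (hc : c ≠ 0) (hx : x * c = c * x) :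
    c⁻¹ * (2 * x) * (2⁻¹ * c) = x := by
  rw [(Commute.ofNat_left 2 x).eq, ← mul_assoc c⁻¹ x 2, mul_assoc (c⁻¹ * x) 2 (2⁻¹ * c),
      mul_inv_cancel_left₀ two_ne, mul_assoc, hx, inv_mul_cancel_left₀ hc]

lemma conj2' (d x : H) (hd : d ≠ 0) (hx : x * d = d * x) :
    (d * 2⁻¹) * ((2 * x) * d⁻¹) = x := by
  rw [mul_assoc d 2⁻¹ _, ← mul_assoc (2:H)⁻¹ (2 * x) d⁻¹,
      inv_mul_cancel_left₀ two_ne, ← mul_assoc, ← hx, mul_inv_cancel_right₀ hd]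

lemma cancel2 (c : H) (hc : c ≠ 0) : (c⁻¹ * 2) * (2⁻¹ * c) = 1 := by
  rw [mul_assoc, mul_inv_cancel_left₀ two_ne, inv_mul_cancel₀ hc]

lemma cancel2' (d : H) (hd : d ≠ 0) : (2 * d⁻¹) * (d * 2⁻¹) = 1 := by
  rw [mul_assoc, inv_mul_cancel_left₀ hd, mul_inv_cancel₀ two_ne]

lemma normSq_one_add (x : H) : normSq (1 + x) = 1 + 2 * x.re + normSq x := by
  simp [Quaternion.normSq_def']
  ring

lemma normSq_one_sub (x : H) : normSq (1 - x) = 1 - 2 * x.re + normSq x := by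
  simp [Quaternion.normSq_def']
  ring

lemma normSq_two : normSq (2 : H) = 4 := by
  rw [show (2 : H) = ((2:ℕ) : H) by norm_cast, normSq_natCast]
  norm_num

lemma left_inv (q : H × H) (hq : q ∈ Siegel) : cayleyInv (cayley q) = q := by
  have hc : 1 + q.2 ≠ 0 := siegel_ne q hq
  have hcomm : q.2 * (1 + q.2) = (1 + q.2) * q.2 := by noncomm_ring
  simp only [cayley, cayleyInv, key1 q.2 hc, key1' q.2 hc]
  have hinv : ((1 + q.2)⁻¹ * 2)⁻¹ = 2⁻¹ * (1 + q.2) := by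
    rw [mul_inv_rev, inv_inv]
  rw [hinv]
  refine Prod.ext ?_ ?_
  · show q.1 * ((1 + q.2)⁻¹ * 2) * (2⁻¹ * (1 + q.2)) = q.1
    rw [mul_assoc, cancel2 _ hc, mul_one]
  · exact conj2 _ _ hc hcomm

lemma right_inv (h : H × H) (hh : h ∈ UnitBall) : cayley (cayleyInv h) = h := by
  have hd : 1 + h.2 ≠ 0 := ball_ne h hh
  have hcomm : h.2 * (1 + h.2) = (1 + h.2) * h.2 := by noncomm_ring
  simp only [cayley, cayleyInv, key2 h.2 hd, key2' h.2 hd]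
  have hinv : ((2 : H) * (1 + h.2)⁻¹)⁻¹ = (1 + h.2) * 2⁻¹ := by
    rw [mul_inv_rev, inv_inv]
  rw [hinv]
  have h2 : ((1 + h.2) * 2⁻¹) * ((2 * h.2) * (1 + h.2)⁻¹) = h.2 := conj2' _ _ hd hcomm
  refine Prod.ext ?_ ?_
  · show h.1 * (1 + h.2)⁻¹ * (1 + ((1 + h.2) * 2⁻¹) * ((2 * h.2) * (1 + h.2)⁻¹)) = h.1
    rw [h2, mul_assoc, inv_mul_cancel₀ hd, mul_one]
  · exact h2

lemma mapsTo_cayley : Set.MapsTo cayley Siegel UnitBall := by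
  intro q hq
  have hc : 1 + q.2 ≠ 0 := siegel_ne q hq
  have hre : q.2.re > ‖q.1‖ ^ 2 := hq
  rw [norm_sq_eq] at hre
  show ‖(cayley q).1‖ ^ 2 + ‖(cayley q).2‖ ^ 2 < 1
  simp only [cayley, key1 q.2 hc]
  rw [norm_sq_eq, norm_sq_eq, map_mul, map_mul, map_mul, map_inv₀, normSq_two,
      normSq_one_add, normSq_one_sub]
  have hpos : 0 < 1 + 2 * q.2.re + normSq q.2 := by
    have := normSq_nonneg (a := q.2)
    have h0 : 0 ≤ normSq q.1 := normSq_nonneg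
    nlinarith
  have key : normSq q.1 * ((1 + 2 * q.2.re + normSq q.2)⁻¹ * 4)
      + (1 + 2 * q.2.re + normSq q.2)⁻¹ * (1 - 2 * q.2.re + normSq q.2)
      = (normSq q.1 * 4 + (1 - 2 * q.2.re + normSq q.2)) / (1 + 2 * q.2.re + normSq q.2) := by
    field_simp
  rw [key, div_lt_one hpos]
  nlinarith
 
lemma mapsTo_cayleyInv : Set.MapsTo cayleyInv UnitBall Siegel := by
  intro h hh
  have hd : 1 + h.2 ≠ 0 := ball_ne h hh
  have hball : ‖h.1‖ ^ 2 + ‖h.2‖ ^ 2 < 1 := hh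
  rw [norm_sq_eq, norm_sq_eq] at hball
  have hnd : 0 < normSq (1 + h.2) :=
    lt_of_le_of_ne normSq_nonneg (Ne.symm (normSq_ne_zero.mpr hd))
  show ((1 - h.2) * (1 + h.2)⁻¹).re > ‖h.1 * (1 + h.2)⁻¹‖ ^ 2
  have hre : ((1 - h.2) * (1 + h.2)⁻¹).re = (normSq (1 + h.2))⁻¹ * (1 - normSq h.2) := by
    have hdef : (1 + h.2)⁻¹ = (normSq (1 + h.2))⁻¹ • star (1 + h.2) := rfl
    rw [hdef, mul_smul_comm, Quaternion.re_smul, smul_eq_mul]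
    congr 1
    simp [Quaternion.re_mul, Quaternion.normSq_def']
    ring
  rw [hre, norm_sq_eq, map_mul, map_inv₀]
  have h1 : 0 ≤ normSq h.1 := normSq_nonneg
  rw [show normSq h.1 * (normSq (1 + h.2))⁻¹ = normSq h.1 / normSq (1 + h.2) from rfl,
      show (normSq (1 + h.2))⁻¹ * (1 - normSq h.2) = (1 - normSq h.2) / normSq (1 + h.2) by
        rw [div_eq_inv_mul],
      gt_iff_lt, div_lt_div_iff₀ hnd hnd]
  nlinarith

end CayleyAux

/-- The Cayley transform is a bijection from the Siegel upper half space `𝒰₁`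
onto the unit ball `B₁`, with inverse `κ⁻¹`; in particular `1 + q₂ ≠ 0` on `𝒰₁` and
`1 + h₂ ≠ 0` on `B₁`, so all the expressions involved are defined. -/
theorem cayley_bijection :
    (∀ q ∈ Siegel, 1 + q.2 ≠ 0) ∧ (∀ h ∈ UnitBall, 1 + h.2 ≠ 0) ∧
      Set.BijOn cayley Siegel UnitBall ∧
      Set.InvOn cayleyInv cayley Siegel UnitBall := by
  have hinv : Set.InvOn cayleyInv cayley Siegel UnitBall :=
    ⟨fun q hq => CayleyAux.left_inv q hq, fun h hh => CayleyAux.right_inv h hh⟩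
  exact ⟨CayleyAux.siegel_ne, CayleyAux.ball_ne,
    hinv.bijOn CayleyAux.mapsTo_cayley CayleyAux.mapsTo_cayleyInv, hinv⟩

end
end

section
/- Let ι : ℍ×ℝ³ → ℍ² be the embedding ι(w,t) = (w, |w|² + 𝐢·t), parametrizing ∂𝒰₁. Let F : ℍ² → ℍ be continuously differentiable and set G = F ∘ ι. Then at every point (w,t), with w = x₀+i₁x₁+i₂x₂+i₃x₃, one has ½(∂G/∂x₀ + i₁∂G/∂x₁ + i₂∂G/∂x₂ + i₃∂G/∂x₃) + w i₁ ∂G/∂t₁ + w i₂ ∂G/∂t₂ + w i₃ ∂G/∂t₃ = (∂̄_{q₁}F)(ι(w,t)) + 2w·(∂̄_{q₂}F)(ι(w,t)). In particular, if F is q-holomorphic (∂̄_{q₁}F = ∂̄_{q₂}F = 0), then the operator H̄ = ∂̄_w + Σₘ w iₘ ∂_{tₘ} annihilates G, i.e. H̄ is a tangential Cauchy–Riemann–Fueter operator on ∂𝒰₁. -/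
noncomputable section

/-- The imaginary unit `i₁`. -/
def e1 : H := ⟨0, 1, 0, 0⟩
/-- The imaginary unit `i₂`. -/
def e2 : H := ⟨0, 0, 1, 0⟩
/-- The imaginary unit `i₃`. -/
def e3 : H := ⟨0, 0, 0, 1⟩

/-- `𝐢·t = i₁t₁ + i₂t₂ + i₃t₃` for `t ∈ ℝ³`. -/
def idot (t : ℝ × ℝ × ℝ) : H := t.1 • e1 + t.2.1 • e2 + t.2.2 • e3

/-- The embedding `ι : ℍ×ℝ³ → ℍ²`, `ι(w,t) = (w, |w|² + 𝐢·t)`, parametrizing `∂𝒰₁`. -/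
def iota (g : H × ℝ × ℝ × ℝ) : H × H :=
  (g.1, ((‖g.1‖ ^ 2 : ℝ) : H) + idot g.2)

/-- `∂̄_{q₁} F` at `P ∈ ℍ²`: `½(∂F/∂x₀ + i₁∂F/∂x₁ + i₂∂F/∂x₂ + i₃∂F/∂x₃)` in the first
quaternion variable, with the imaginary units acting by left multiplication. -/
def dbarQ1 (F : H × H → H) (P : H × H) : H :=
  (1 / 2 : ℝ) •
    (fderiv ℝ F P ((1 : H), (0 : H)) + e1 * fderiv ℝ F P (e1, (0 : H)) +
      e2 * fderiv ℝ F P (e2, (0 : H)) + e3 * fderiv ℝ F P (e3, (0 : H)))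

/-- `∂̄_{q₂} F` at `P ∈ ℍ²`, analogously in the second quaternion variable. -/
def dbarQ2 (F : H × H → H) (P : H × H) : H :=
  (1 / 2 : ℝ) •
    (fderiv ℝ F P ((0 : H), (1 : H)) + e1 * fderiv ℝ F P ((0 : H), e1) +
      e2 * fderiv ℝ F P ((0 : H), e2) + e3 * fderiv ℝ F P ((0 : H), e3))

/-- The tangential operator `H̄ = ∂̄_w + Σₘ w iₘ ∂_{tₘ}` applied to `G : ℍ×ℝ³ → ℍ`
at the point `p = (w,t)`. -/
def Hbar (G : H × ℝ × ℝ × ℝ → H) (p : H × ℝ × ℝ × ℝ) : H :=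
  (1 / 2 : ℝ) •
      (fderiv ℝ G p ((1 : H), (0 : ℝ), (0 : ℝ), (0 : ℝ)) +
        e1 * fderiv ℝ G p (e1, (0 : ℝ), (0 : ℝ), (0 : ℝ)) +
        e2 * fderiv ℝ G p (e2, (0 : ℝ), (0 : ℝ), (0 : ℝ)) +
        e3 * fderiv ℝ G p (e3, (0 : ℝ), (0 : ℝ), (0 : ℝ))) +
    p.1 * e1 * fderiv ℝ G p ((0 : H), (1 : ℝ), (0 : ℝ), (0 : ℝ)) +
    p.1 * e2 * fderiv ℝ G p ((0 : H), (0 : ℝ), (1 : ℝ), (0 : ℝ)) +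
    p.1 * e3 * fderiv ℝ G p ((0 : H), (0 : ℝ), (0 : ℝ), (1 : ℝ))

open scoped RealInnerProductSpace
open ContinuousLinearMap

/-- The derivative of `iota` at a point with first component `w`. -/
def Dmap (w : H) : (H × ℝ × ℝ × ℝ) →L[ℝ] H × H :=
  (fst ℝ H (ℝ × ℝ × ℝ)).prod
    ((2 • (innerSL ℝ w).comp (fst ℝ H (ℝ × ℝ × ℝ))).smulRight (1 : H) +
      (((fst ℝ ℝ (ℝ × ℝ)).comp (snd ℝ H (ℝ × ℝ × ℝ))).smulRight e1 +
        (((fst ℝ ℝ ℝ).comp (snd ℝ ℝ (ℝ × ℝ))).comp (snd ℝ H (ℝ × ℝ × ℝ))).smulRight e2 +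
        (((snd ℝ ℝ ℝ).comp (snd ℝ ℝ (ℝ × ℝ))).comp (snd ℝ H (ℝ × ℝ × ℝ))).smulRight e3))

theorem hasFDerivAt_iota (p : H × ℝ × ℝ × ℝ) : HasFDerivAt iota (Dmap p.1) p := by
  have hfun : iota = fun g : H × ℝ × ℝ × ℝ =>
      (g.1, (‖g.1‖ ^ 2 : ℝ) • (1 : H) +
        (g.2.1 • e1 + g.2.2.1 • e2 + g.2.2.2 • e3)) := by
    funext g
    simp only [iota, idot]
    congr 2
    apply QuaternionAlgebra.ext <;> simp [← Quaternion.coe_pow, Quaternion.re_one, Quaternion.imI_one, Quaternion.imJ_one, Quaternion.imK_one]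
  rw [hfun]
  exact (hasFDerivAt_fst (p := p)).prodMk
    (((hasFDerivAt_fst (p := p)).norm_sq.smul_const (1 : H)).add
      ((((hasFDerivAt_fst.comp p hasFDerivAt_snd).smul_const e1).add
        (((hasFDerivAt_fst.comp p.2 hasFDerivAt_snd).comp p hasFDerivAt_snd).smul_const e2)).add
        ((((hasFDerivAt_snd.comp p.2 hasFDerivAt_snd).comp p hasFDerivAt_snd)).smul_const e3)))

theorem Dmap_eval1 (w : H) :
    Dmap w ((1:H), (0:ℝ), (0:ℝ), (0:ℝ)) = ((1:H), (2 * w.re : ℝ) • (1:H)) := by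
  simp [Dmap, Quaternion.inner_def, Quaternion.re_mul, two_smul, two_mul,
    Prod.ext_iff, ContinuousLinearMap.smulRight_apply] <;> simp [e1, e2, e3]

theorem Dmap_eval2 (w : H) :
    Dmap w (e1, (0:ℝ), (0:ℝ), (0:ℝ)) = (e1, (2 * w.imI : ℝ) • (1:H)) := by
  simp [Dmap, Quaternion.inner_def, Quaternion.re_mul, two_smul, two_mul,
    Prod.ext_iff, ContinuousLinearMap.smulRight_apply] <;> simp [e1, e2, e3]

theorem Dmap_eval3 (w : H) :
    Dmap w (e2, (0:ℝ), (0:ℝ), (0:ℝ)) = (e2, (2 * w.imJ : ℝ) • (1:H)) := by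
  simp [Dmap, Quaternion.inner_def, Quaternion.re_mul, two_smul, two_mul,
    Prod.ext_iff, ContinuousLinearMap.smulRight_apply] <;> simp [e1, e2, e3]

theorem Dmap_eval4 (w : H) :
    Dmap w (e3, (0:ℝ), (0:ℝ), (0:ℝ)) = (e3, (2 * w.imK : ℝ) • (1:H)) := by
  simp [Dmap, Quaternion.inner_def, Quaternion.re_mul, two_smul, two_mul,
    Prod.ext_iff, ContinuousLinearMap.smulRight_apply] <;> simp [e1, e2, e3]

theorem Dmap_eval5 (w : H) :
    Dmap w ((0:H), (1:ℝ), (0:ℝ), (0:ℝ)) = ((0:H), e1) := by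
  simp [Dmap, Quaternion.inner_def, Quaternion.re_mul, two_smul, two_mul,
    Prod.ext_iff, ContinuousLinearMap.smulRight_apply] <;> simp [e1, e2, e3]

theorem Dmap_eval6 (w : H) :
    Dmap w ((0:H), (0:ℝ), (1:ℝ), (0:ℝ)) = ((0:H), e2) := by
  simp [Dmap, Quaternion.inner_def, Quaternion.re_mul, two_smul, two_mul,
    Prod.ext_iff, ContinuousLinearMap.smulRight_apply] <;> simp [e1, e2, e3]

theorem Dmap_eval7 (w : H) :
    Dmap w ((0:H), (0:ℝ), (0:ℝ), (1:ℝ)) = ((0:H), e3) := by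
  simp [Dmap, Quaternion.inner_def, Quaternion.re_mul, two_smul, two_mul,
    Prod.ext_iff, ContinuousLinearMap.smulRight_apply] <;> simp [e1, e2, e3]

set_option maxHeartbeats 1000000 in
theorem quat_algebra_key (A B1 B2 B3 C D1 D2 D3 : H) (x0 x1 x2 x3 : ℝ) (w : H)
    (hw : w = x0 • (1:H) + x1 • e1 + x2 • e2 + x3 • e3) :
    (1/2:ℝ) • ((A + (2*x0) • C) + e1*(B1 + (2*x1) • C) + e2*(B2 + (2*x2) • C) +
        e3*(B3 + (2*x3) • C)) + w*e1*D1 + w*e2*D2 + w*e3*D3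
      = (1/2:ℝ) • (A + e1*B1 + e2*B2 + e3*B3) +
        2*w*((1/2:ℝ) • (C + e1*D1 + e2*D2 + e3*D3)) := by
  have h2 : (2 : H) * w = ((2:ℝ) • w) := by rw [two_mul, two_smul]
  rw [h2]
  subst hw
  simp only [mul_add, add_mul, smul_add, mul_smul_comm, smul_mul_assoc, smul_smul,
    mul_assoc, one_mul]
  module

theorem quat_decompose (w : H) :
    w = w.re • (1:H) + w.imI • e1 + w.imJ • e2 + w.imK • e3 := by
  apply QuaternionAlgebra.ext <;> simp [Quaternion.re_smul, Quaternion.imI_smul, Quaternion.imJ_smul, Quaternion.imK_smul, Quaternion.re_one, Quaternion.imI_one, Quaternion.imJ_one, Quaternion.imK_one] <;> simp [e1, e2, e3]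

/-- For `F : ℍ² → ℍ` continuously differentiable and `G = F ∘ ι`, at every
point `(w,t)` one has `H̄G = (∂̄_{q₁}F)(ι(w,t)) + 2w·(∂̄_{q₂}F)(ι(w,t))`. In particular, if `F`
is q-holomorphic then `H̄` annihilates `G`, i.e. `H̄` is a tangential Cauchy–Riemann–Fueter
operator on `∂𝒰₁`. -/
theorem Hbar_tangential (F : H × H → H) (hF : ContDiff ℝ 1 F) :
    (∀ p : H × ℝ × ℝ × ℝ,
      Hbar (F ∘ iota) p = dbarQ1 F (iota p) + 2 * p.1 * dbarQ2 F (iota p)) ∧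
      ((∀ P : H × H, dbarQ1 F P = 0) → (∀ P : H × H, dbarQ2 F P = 0) →
        ∀ p : H × ℝ × ℝ × ℝ, Hbar (F ∘ iota) p = 0) := by
  have key : ∀ p : H × ℝ × ℝ × ℝ,
      Hbar (F ∘ iota) p = dbarQ1 F (iota p) + 2 * p.1 * dbarQ2 F (iota p) := by
    intro p
    have hL : HasFDerivAt F (fderiv ℝ F (iota p)) (iota p) :=
      ((hF.differentiable one_ne_zero) (iota p)).hasFDerivAt
    have hG : HasFDerivAt (F ∘ iota) ((fderiv ℝ F (iota p)).comp (Dmap p.1)) p :=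
      hL.comp p (hasFDerivAt_iota p)
    have hder : fderiv ℝ (F ∘ iota) p = (fderiv ℝ F (iota p)).comp (Dmap p.1) := hG.fderiv
    have lin : ∀ (a : H) (c : ℝ),
        fderiv ℝ F (iota p) (a, c • (1:H)) =
          fderiv ℝ F (iota p) (a, (0:H)) + c • fderiv ℝ F (iota p) ((0:H), (1:H)) := by
      intro a c
      have : (a, c • (1:H)) = (a, (0:H)) + c • ((0:H), (1:H)) := by
        simp [Prod.ext_iff]
      rw [this, map_add, map_smul]
    simp only [Hbar, dbarQ1, dbarQ2, hder, ContinuousLinearMap.comp_apply,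
      Dmap_eval1, Dmap_eval2, Dmap_eval3, Dmap_eval4, Dmap_eval5, Dmap_eval6, Dmap_eval7,
      lin]
    exact quat_algebra_key _ _ _ _ _ _ _ _ _ _ _ _ _ (quat_decompose p.1)
  refine ⟨key, fun h1 h2 p => ?_⟩
  rw [key p, h1, h2]
  simp

end
end

section
/- The following integral evaluation holds: ∫_{ℝ⁴} ∫_{ℝ³} (|t|² + (|w|²+1)²)⁻⁵ dt dw = π⁴/384, where |·| denotes Euclidean norm. Equivalently, the constant k determined by k⁻¹ = 4⁵ · ∫_{ℝ⁴}∫_{ℝ³} (|t|² + (|w|²+1)²)⁻⁵ dt dw equals 3/(8π⁴). -/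
open MeasureTheory Real Filter Topology Set Metric

noncomputable section

private lemma tendsto_inv_sq_aux {k : ℕ} (hk : 1 ≤ k) :
    Tendsto (fun x : ℝ => ((x ^ 2 + 1) ^ k)⁻¹) atTop (𝓝 0) := by
  apply tendsto_of_tendsto_of_tendsto_of_le_of_le' tendsto_const_nhds tendsto_inv_atTop_zero
  · filter_upwards [eventually_ge_atTop (1:ℝ)] with x hx
    positivity
  · filter_upwards [eventually_ge_atTop (1:ℝ)] with x hx
    have h1 : x ≤ x ^ 2 + 1 := by nlinarith
    have h2 : x ^ 2 + 1 ≤ (x ^ 2 + 1) ^ k := by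
      calc x ^ 2 + 1 = (x ^ 2 + 1) ^ 1 := (pow_one _).symm
      _ ≤ (x ^ 2 + 1) ^ k := pow_le_pow_right₀ (by nlinarith) hk
    exact inv_anti₀ (by linarith) (by linarith)

/-- `∫₀^∞ r²/(r²+1)⁵ dr = 5π/256`. -/
private lemma radial3 :
    ∫ r in Ioi (0:ℝ), r ^ 2 * (((r ^ 2 + 1) ^ 5)⁻¹) = 5 * π / 256 := by
  -- antiderivative
  set F : ℝ → ℝ := fun x =>
    5 / 128 * arctan x + (15*x^7 + 55*x^5 + 73*x^3 - 15*x) / (384 * (x^2+1)^4) with hF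
  have hpos : ∀ x : ℝ, (0:ℝ) < x ^ 2 + 1 := fun x => by positivity
  have hderiv : ∀ x ∈ Ici (0:ℝ), HasDerivAt F (x ^ 2 * (((x ^ 2 + 1) ^ 5)⁻¹)) x := by
    intro x _
    have h1 : HasDerivAt (fun x : ℝ => 5 / 128 * arctan x) (5 / 128 * (1 / (1 + x^2))) x :=
      (Real.hasDerivAt_arctan x).const_mul (5/128)
    have hs : HasDerivAt (fun x : ℝ => x ^ 2 + 1) (2 * x) x := by
      simpa using (hasDerivAt_pow 2 x).add_const 1
    have hN : HasDerivAt (fun x : ℝ => 15*x^7 + 55*x^5 + 73*x^3 - 15*x)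
        (105*x^6 + 275*x^4 + 219*x^2 - 15) x := by
      have := (((((hasDerivAt_pow 7 x).const_mul 15).add
        ((hasDerivAt_pow 5 x).const_mul 55)).add
        ((hasDerivAt_pow 3 x).const_mul 73)).sub ((hasDerivAt_id x).const_mul 15))
      refine this.congr_deriv ?_
      push_cast; ring
    have hD : HasDerivAt (fun x : ℝ => 384 * (x^2+1)^4) (384 * (4 * (x^2+1)^3 * (2*x))) x :=
      (hs.pow 4).const_mul 384
    have hq := hN.div hD (by positivity)
    have := h1.add hq
    refine this.congr_deriv ?_
    have h0 : (x^2 + 1) ≠ 0 := (hpos x).ne'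
    field_simp
    ring
  have hnn : ∀ x ∈ Ioi (0:ℝ), 0 ≤ x ^ 2 * (((x ^ 2 + 1) ^ 5)⁻¹) := by
    intro x _; positivity
  have htend : Tendsto F atTop (𝓝 (5 * π / 256)) := by
    have h1 : Tendsto (fun x : ℝ => 5 / 128 * arctan x) atTop (𝓝 (5 / 128 * (π / 2))) :=
      (tendsto_nhds_of_tendsto_nhdsWithin Real.tendsto_arctan_atTop).const_mul _
    have h2 : Tendsto (fun x : ℝ =>
        (15*x^7 + 55*x^5 + 73*x^3 - 15*x) / (384 * (x^2+1)^4)) atTop (𝓝 0) := by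
      apply tendsto_of_tendsto_of_tendsto_of_le_of_le' tendsto_const_nhds tendsto_inv_atTop_zero
      · filter_upwards [eventually_ge_atTop (1:ℝ)] with x hx
        have := hpos x
        apply div_nonneg _ (by positivity)
        nlinarith [le_self_pow₀ hx (by norm_num : 7 ≠ 0), le_self_pow₀ hx (by norm_num : 5 ≠ 0), le_self_pow₀ hx (by norm_num : 3 ≠ 0)]
      · filter_upwards [eventually_ge_atTop (1:ℝ)] with x hx
        have hx0 : 0 < x := by linarith
        rw [div_le_iff₀ (by positivity)]
        have hD : x⁻¹ * (384 * (x^2+1)^4) = 384 * (x^2+1)^4 / x := by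
          field_simp
        rw [hD, le_div_iff₀ hx0]
        have hx2 : 1 ≤ x ^ 2 := by nlinarith
        have h4 : (x^2)^4 ≤ (x^2+1)^4 :=
          pow_le_pow_left₀ (by positivity) (by linarith) 4
        nlinarith [h4, mul_le_mul_of_nonneg_left hx2 (by positivity : (0:ℝ) ≤ x^6),
          mul_le_mul_of_nonneg_left hx2 (by positivity : (0:ℝ) ≤ x^4),
          mul_le_mul_of_nonneg_left hx2 (by positivity : (0:ℝ) ≤ x^2)]
    have := h1.add h2
    convert this using 2
    ring
  have key := integral_Ioi_of_hasDerivAt_of_nonneg' hderiv hnn htend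
  rw [key, hF]
  simp [Real.arctan_zero]
/-- `∫₀^∞ r³/(r²+1)⁷ dr = 1/60`. -/
private lemma radial4 :
    ∫ r in Ioi (0:ℝ), r ^ 3 * (((r ^ 2 + 1) ^ 7)⁻¹) = 1 / 60 := by
  set F : ℝ → ℝ := fun x => -(1/10) * ((x^2+1)^5)⁻¹ + (1/12) * ((x^2+1)^6)⁻¹ with hF
  have hpos : ∀ x : ℝ, (0:ℝ) < x ^ 2 + 1 := fun x => by positivity
  have hderiv : ∀ x ∈ Ici (0:ℝ), HasDerivAt F (x ^ 3 * (((x ^ 2 + 1) ^ 7)⁻¹)) x := by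
    intro x _
    have hs : HasDerivAt (fun x : ℝ => x ^ 2 + 1) (2 * x) x := by
      simpa using (hasDerivAt_pow 2 x).add_const 1
    have h5 := (((hs.pow 5).inv (pow_ne_zero _ (hpos x).ne')).const_mul (-(1/10):ℝ))
    have h6 := (((hs.pow 6).inv (pow_ne_zero _ (hpos x).ne')).const_mul ((1/12):ℝ))
    have := h5.add h6
    refine this.congr_deriv ?_
    have h0 : (x^2 + 1) ≠ 0 := (hpos x).ne'
    simp only [Pi.pow_apply]
    field_simp
    ring
  have hnn : ∀ x ∈ Ioi (0:ℝ), 0 ≤ x ^ 3 * (((x ^ 2 + 1) ^ 7)⁻¹) := by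
    intro x hx
    have : 0 < x := hx
    positivity
  have htend : Tendsto F atTop (𝓝 0) := by
    have h := ((tendsto_inv_sq_aux (k := 5) (by norm_num)).const_mul (-(1/10):ℝ)).add
      ((tendsto_inv_sq_aux (k := 6) (by norm_num)).const_mul ((1/12):ℝ))
    rw [hF]
    simpa using h
  have key := integral_Ioi_of_hasDerivAt_of_nonneg' hderiv hnn htend
  rw [key, hF]
  norm_num

private lemma gamma52 : Real.Gamma ((3:ℝ)/2 + 1) = 3/4 * Real.sqrt π := by
  rw [Real.Gamma_add_one (by norm_num)]
  have : (3:ℝ)/2 = 1/2 + 1 := by norm_num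
  rw [this, Real.Gamma_add_one (by norm_num), Real.Gamma_one_half_eq]
  ring

/-- `∫_{ℝ³} (‖t‖²+1)⁻⁵ dt = 5π²/64`. -/
private lemma I3 :
    ∫ t : EuclideanSpace ℝ (Fin 3), ((‖t‖ ^ 2 + 1) ^ 5)⁻¹ = 5 * π ^ 2 / 64 := by
  have key := integral_fun_norm_addHaar (volume : Measure (EuclideanSpace ℝ (Fin 3)))
    (fun r : ℝ => ((r ^ 2 + 1) ^ 5)⁻¹)
  have hvol : (volume (ball (0 : EuclideanSpace ℝ (Fin 3)) 1)).toReal = 4 * π / 3 := by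
    rw [EuclideanSpace.volume_ball]
    simp only [Fintype.card_fin]
    rw [ENNReal.ofReal_one, one_pow, one_mul, ENNReal.toReal_ofReal]
    · push_cast
      rw [gamma52]
      rw [div_eq_iff (by positivity)]
      nlinarith [Real.sqrt_nonneg π, Real.sq_sqrt pi_pos.le]
    · push_cast
      rw [gamma52]
      positivity
  rw [key, finrank_euclideanSpace_fin, measureReal_def, hvol]
  simp only [smul_eq_mul, nsmul_eq_mul]
  have h2 : ∫ y in Ioi (0:ℝ), y ^ (3-1) * ((y ^ 2 + 1) ^ 5)⁻¹ = 5 * π / 256 := radial3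
  rw [h2]
  ring

/-- `∫_{ℝ⁴} (‖w‖²+1)⁻⁷ dw = π²/30`. -/
private lemma I4 :
    ∫ w : EuclideanSpace ℝ (Fin 4), ((‖w‖ ^ 2 + 1) ^ 7)⁻¹ = π ^ 2 / 30 := by
  have key := integral_fun_norm_addHaar (volume : Measure (EuclideanSpace ℝ (Fin 4)))
    (fun r : ℝ => ((r ^ 2 + 1) ^ 7)⁻¹)
  have hvol : (volume (ball (0 : EuclideanSpace ℝ (Fin 4)) 1)).toReal = π ^ 2 / 2 := by
    rw [EuclideanSpace.volume_ball]
    simp only [Fintype.card_fin]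
    rw [ENNReal.ofReal_one, one_pow, one_mul, ENNReal.toReal_ofReal]
    · push_cast
      have h3 : (4:ℝ)/2 + 1 = (2:ℕ) + 1 := by norm_num
      rw [h3, Real.Gamma_nat_eq_factorial]
      have h : Real.sqrt π ^ 4 = π ^ 2 := by
        nlinarith [Real.sq_sqrt pi_pos.le]
      rw [h]
      norm_num
    · positivity
  rw [key, finrank_euclideanSpace_fin, measureReal_def, hvol]
  simp only [smul_eq_mul, nsmul_eq_mul]
  have h2 : ∫ y in Ioi (0:ℝ), y ^ (4-1) * ((y ^ 2 + 1) ^ 7)⁻¹ = 1 / 60 := radial4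
  rw [h2]
  ring

/-- Scaling: the inner integral. -/
private lemma inner_eval (a : ℝ) (ha : 1 ≤ a) :
    ∫ t : EuclideanSpace ℝ (Fin 3), ((‖t‖ ^ 2 + a ^ 2) ^ 5)⁻¹
      = (a ^ 7)⁻¹ * (5 * π ^ 2 / 64) := by
  have h0 : 0 < a := lt_of_lt_of_le one_pos ha
  have key := Measure.integral_comp_smul (μ := (volume : Measure (EuclideanSpace ℝ (Fin 3))))
    (fun t : EuclideanSpace ℝ (Fin 3) => ((‖t‖ ^ 2 + 1) ^ 5)⁻¹) a⁻¹
  have e1 : ∀ x : EuclideanSpace ℝ (Fin 3),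
      ((‖a⁻¹ • x‖ ^ 2 + 1) ^ 5)⁻¹ = a ^ 10 * ((‖x‖ ^ 2 + a ^ 2) ^ 5)⁻¹ := by
    intro x
    rw [norm_smul, Real.norm_eq_abs, abs_of_pos (inv_pos.mpr h0)]
    have h1 : ((a⁻¹ * ‖x‖) ^ 2 + 1) ^ 5 = (‖x‖ ^ 2 + a ^ 2) ^ 5 / a ^ 10 := by
      field_simp
    rw [h1, inv_div, div_eq_mul_inv]
  simp only [e1] at key
  rw [MeasureTheory.integral_const_mul] at key
  rw [finrank_euclideanSpace_fin, I3] at key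
  have habs : |((a⁻¹ : ℝ) ^ 3)⁻¹| = a ^ 3 := by
    rw [← inv_pow, inv_inv, abs_of_pos (by positivity)]
  rw [habs, smul_eq_mul] at key
  refine mul_left_cancel₀ (pow_ne_zero 10 h0.ne') ?_
  rw [key]
  field_simp

/-- The normalization integral for the Cauchy–Szegő kernel:
`∫_{ℝ⁴}∫_{ℝ³} (|t|² + (|w|²+1)²)⁻⁵ dt dw`. -/
def szegoNormIntegral : ℝ :=
  ∫ w : EuclideanSpace ℝ (Fin 4),
    ∫ t : EuclideanSpace ℝ (Fin 3), ((‖t‖ ^ 2 + (‖w‖ ^ 2 + 1) ^ 2) ^ 5)⁻¹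

private lemma szego_eval : szegoNormIntegral = π ^ 4 / 384 := by
  unfold szegoNormIntegral
  have e : ∀ w : EuclideanSpace ℝ (Fin 4),
      (∫ t : EuclideanSpace ℝ (Fin 3), ((‖t‖ ^ 2 + (‖w‖ ^ 2 + 1) ^ 2) ^ 5)⁻¹)
        = (5 * π ^ 2 / 64) * (((‖w‖ ^ 2 + 1) ^ 7)⁻¹) := by
    intro w
    rw [inner_eval (‖w‖ ^ 2 + 1) (by nlinarith [sq_nonneg ‖w‖])]
    ring
  simp_rw [e]
  rw [MeasureTheory.integral_const_mul, I4]
  ring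

/-- `∫_{ℝ⁴}∫_{ℝ³} (|t|² + (|w|²+1)²)⁻⁵ dt dw = π⁴/384`; equivalently the
constant `k` determined by `k⁻¹ = 4⁵ · ∫∫ (|t|² + (|w|²+1)²)⁻⁵` equals `3/(8π⁴)`. -/
theorem szego_constant_integral :
    szegoNormIntegral = π ^ 4 / 384 ∧
      ∀ k : ℝ, k⁻¹ = 4 ^ 5 * szegoNormIntegral → k = 3 / (8 * π ^ 4) := by
  refine ⟨szego_eval, fun k hk => ?_⟩
  rw [szego_eval] at hk
  have h2 : k⁻¹ = 8 * π ^ 4 / 3 := by rw [hk]; ring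
  have hne : k ≠ 0 := by
    intro h
    rw [h, inv_zero] at h2
    have : (0:ℝ) < 8 * π ^ 4 / 3 := by positivity
    linarith
  rw [← inv_inv k, h2]
  rw [inv_div]
end
end

section
/- For every complex number λ with |Re λ| < 2, the integral ∫_{−∞}^{∞} e^{−λu} / cosh²(u) du converges and equals 2·Γ((2+λ)/2)·Γ((2−λ)/2), where Γ is the Gamma function. -/
open MeasureTheory Real Complex

noncomputable section

/-- For every `λ ∈ ℂ` with `|Re λ| < 2` the integral
`∫_{−∞}^{∞} e^{−λu}/cosh²(u) du` converges and equals `2·Γ((2+λ)/2)·Γ((2−λ)/2)`. -/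
theorem integral_exp_div_cosh_sq (lam : ℂ) (hlam : |lam.re| < 2) :
    Integrable (fun u : ℝ => Complex.exp (-lam * u) / (Real.cosh u : ℂ) ^ 2) ∧
      ∫ u : ℝ, Complex.exp (-lam * u) / (Real.cosh u : ℂ) ^ 2
        = 2 * Complex.Gamma ((2 + lam) / 2) * Complex.Gamma ((2 - lam) / 2) := by
  obtain ⟨hl1, hl2⟩ := abs_lt.1 hlam
  set a : ℂ := (2 + lam) / 2 with ha_def
  set b : ℂ := (2 - lam) / 2 with hb_def
  have ha : 0 < a.re := by
    have : a.re = (2 + lam.re) / 2 := by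
      simp [ha_def, Complex.div_re, Complex.normSq_apply]
    rw [this]; linarith
  have hb : 0 < b.re := by
    have : b.re = (2 - lam.re) / 2 := by
      simp [hb_def, Complex.div_re, Complex.normSq_apply]
    rw [this]; linarith
  set f : ℝ → ℝ := fun u => (1 + Real.exp (2 * u))⁻¹ with hf_def
  set f' : ℝ → ℝ := fun u => -(2 * Real.exp (2 * u)) / (1 + Real.exp (2 * u)) ^ 2 with hf'_def
  have hEpos : ∀ u : ℝ, (0:ℝ) < 1 + Real.exp (2 * u) := fun u => by positivity
  have hderiv : ∀ u : ℝ, HasDerivAt f (f' u) u := by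
    intro u
    have h0 : HasDerivAt (fun u : ℝ => 2 * u) 2 u := by
      simpa using (hasDerivAt_id u).const_mul 2
    have h1 := ((Real.hasDerivAt_exp (2 * u)).comp u h0).const_add 1
    have h2 := h1.inv (hEpos u).ne'
    convert h2 using 1
    · rfl
    · rfl
    · rfl
    · simp [hf'_def]
      ring
  have hanti : StrictAnti f := by
    intro u v huv
    have : 1 + Real.exp (2 * u) < 1 + Real.exp (2 * v) :=
      add_lt_add_right (Real.exp_lt_exp.2 (by linarith)) 1
    exact inv_strictAnti₀ (hEpos u) this
  have hinj : Set.InjOn f Set.univ := hanti.injective.injOn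
  have himg : f '' Set.univ = Set.Ioo 0 1 := by
    rw [Set.image_univ]
    ext y
    constructor
    · rintro ⟨u, rfl⟩
      refine ⟨by positivity, ?_⟩
      rw [inv_lt_one_iff₀]
      right
      linarith [Real.exp_pos (2 * u)]
    · rintro ⟨hy0, hy1⟩
      refine ⟨Real.log ((1 - y) / y) / 2, ?_⟩
      have hq : (0:ℝ) < (1 - y) / y := div_pos (by linarith) hy0
      simp only [hf_def]
      rw [mul_div_cancel₀ _ (two_ne_zero), Real.exp_log hq]
      field_simp
      ring
  set g : ℝ → ℂ := fun x : ℝ => (x : ℂ) ^ (a - 1) * (1 - (x : ℂ)) ^ (b - 1) with hg_def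
  -- key pointwise identity
  have key : ∀ u : ℝ, |f' u| • g (f u) =
      Complex.exp (-lam * u) / (Real.cosh u : ℂ) ^ 2 / 2 := by
    intro u
    set E := Real.exp (2 * u) with hE
    have hE0 : (0:ℝ) < E := Real.exp_pos _
    have hfu : f u = (1 + E)⁻¹ := rfl
    have h1f : (1 : ℝ) - (1 + E)⁻¹ = E / (1 + E) := by
      field_simp
      ring
    have habs : |f' u| = 2 * E / (1 + E) ^ 2 := by
      rw [hf'_def]
      simp only
      rw [abs_div, abs_neg, abs_of_pos (by positivity), abs_of_pos (by positivity)]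
    have ha1 : a - 1 = lam / 2 := by rw [ha_def]; ring
    have hb1 : b - 1 = -(lam / 2) := by rw [hb_def]; ring
    -- compute g (f u)
    have hx : (0:ℝ) < (1 + E)⁻¹ := by positivity
    have hy : (0:ℝ) < E / (1 + E) := by positivity
    have cpow_pos_real : ∀ (x : ℝ), 0 < x → ∀ s : ℂ,
        (x : ℂ) ^ s = Complex.exp ((Real.log x : ℂ) * s) := by
      intro x hx s
      rw [Complex.cpow_def_of_ne_zero (by exact_mod_cast hx.ne'),
        Complex.ofReal_log hx.le]
    have hgfu : g (f u) = Complex.exp (-lam * u) := by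
      have e1 : ((f u : ℝ) : ℂ) = (((1 + E)⁻¹ : ℝ) : ℂ) := by rw [hfu]
      have e2 : (1 : ℂ) - ((f u : ℝ) : ℂ) = ((E / (1 + E) : ℝ) : ℂ) := by
        rw [hfu, ← h1f]; push_cast; ring
      rw [hg_def]
      simp only [ha1, hb1]
      rw [e1, e2, cpow_pos_real _ hx, cpow_pos_real _ hy]
      rw [← Complex.exp_add]
      congr 1
      have hlogx : Real.log ((1+E)⁻¹) = -Real.log (1+E) := Real.log_inv _
      have hlogy : Real.log (E / (1+E)) = Real.log E - Real.log (1+E) :=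
        Real.log_div hE0.ne' (hEpos u).ne'
      have hlogE : Real.log E = 2 * u := Real.log_exp _
      rw [hlogx, hlogy, hlogE]
      push_cast
      ring
    rw [hgfu, habs]
    have hcosh : ((2:ℝ) * E / (1 + E) ^ 2) = 1 / (2 * Real.cosh u ^ 2) := by
      rw [Real.cosh_eq]
      have h2u : E = Real.exp u * Real.exp u := by
        rw [hE, ← Real.exp_add]; ring_nf
      have hexpu := Real.exp_pos u
      have hexpnu := Real.exp_pos (-u)
      have hprod : Real.exp u * Real.exp (-u) = 1 := by
        rw [← Real.exp_add]; simp
      rw [h2u]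
      field_simp
      ring_nf
      nlinarith [hprod]
    rw [hcosh]
    have hch : (Real.cosh u : ℂ) ≠ 0 := by
      exact_mod_cast (Real.cosh_pos (x := u)).ne'
    rw [Complex.real_smul]
    push_cast
    field_simp
  -- integrability of g on Ioo 0 1
  have hbeta_int : IntegrableOn g (Set.Ioo (0:ℝ) 1) := by
    have := Complex.betaIntegral_convergent ha hb
    rw [intervalIntegrable_iff_integrableOn_Ioo_of_le zero_le_one] at this
    exact this
  have hIoo : Set.Ioo (0:ℝ) 1 = f '' Set.univ := himg.symm
  have hderivW : ∀ x ∈ (Set.univ : Set ℝ), HasDerivWithinAt f (f' x) Set.univ x :=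
    fun x _ => (hderiv x).hasDerivWithinAt
  have hint2 : Integrable (fun u : ℝ => |f' u| • g (f u)) := by
    have := (integrableOn_image_iff_integrableOn_abs_deriv_smul MeasurableSet.univ
      hderivW hinj g).1 (hIoo ▸ hbeta_int)
    simpa [IntegrableOn, Measure.restrict_univ] using this
  have hfun : (fun u : ℝ => Complex.exp (-lam * u) / (Real.cosh u : ℂ) ^ 2)
      = fun u : ℝ => (2:ℂ) • (|f' u| • g (f u)) := by
    funext u
    rw [key u]
    simp only [smul_eq_mul]
    ring
  have hint : Integrable (fun u : ℝ => Complex.exp (-lam * u) / (Real.cosh u : ℂ) ^ 2) := by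
    rw [hfun]
    exact (hint2.smul (2:ℂ)).congr (by filter_upwards with u; simp)
  refine ⟨hint, ?_⟩
  -- the change of variables
  have hchg : ∫ x in Set.Ioo (0:ℝ) 1, g x = ∫ u : ℝ, |f' u| • g (f u) := by
    rw [hIoo, integral_image_eq_integral_abs_deriv_smul MeasurableSet.univ hderivW hinj g,
      Measure.restrict_univ]
  have hval : ∫ u : ℝ, Complex.exp (-lam * u) / (Real.cosh u : ℂ) ^ 2
      = 2 * ∫ x in Set.Ioo (0:ℝ) 1, g x := by
    rw [hchg, hfun, integral_smul, smul_eq_mul]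
  rw [hval]
  -- beta integral identity
  have hbeta : ∫ x in Set.Ioo (0:ℝ) 1, g x = Complex.betaIntegral a b := by
    rw [Complex.betaIntegral, intervalIntegral.integral_of_le zero_le_one,
      ← integral_Ioc_eq_integral_Ioo]
  rw [hbeta]
  have hab : a + b = 2 := by rw [ha_def, hb_def]; ring
  have := Complex.Gamma_mul_Gamma_eq_betaIntegral ha hb
  rw [hab] at this
  have h2 : Complex.Gamma 2 = 1 := by
    have := Complex.Gamma_add_one 1 one_ne_zero
    simpa [Complex.Gamma_one] using this
  rw [h2, one_mul] at this
  rw [← this]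
  ring

end
end
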